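/- Assume a = a(ρ) ∈ (0, 1] and ρ > 0. Let (f(t))_{t≥0} be a weak solution of the spatially homogeneous Boltzmann-type model with initial datum f₀ of total mass ρ, and set θ̄₀ := (1/ρ)∫_I |θ − α_d| f₀(dθ). If θ̄₀ < π(1/a − 1) and |α_c| ≤ (π/2)(1/a − 1) − θ̄₀/2, then θ̄(t) := (1/ρ)∫_I |θ − α_d| f(t)(dθ) tends to 0 as t → +∞ (i.e. f(t) converges to the aligned state ρδ_{α_d} in first moment, hence in 1-Wasserstein distance). -/

import Mathlib

open MeasureTheory Real Filter
open scoped Real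

/-- The angular collision-probability profile `𝒢(s) = (1/π)·min{s, 2π−s}`. -/
noncomputable def Gfun (s : ℝ) : ℝ := (1 / π) * min s (2 * π - s)

/-- The collision probability `P(θ⁎, φ⁎) = a·𝒢(|θ⁎ − φ⁎|)`. -/
noncomputable def Pcoll (a θ φ : ℝ) : ℝ := a * Gfun |θ - φ|

/-- The post-interaction angle
`𝒞(θ⁎, φ⁎) = θ⁎ + (1 − P(θ⁎, φ⁎))(α_d − θ⁎) + P(θ⁎, φ⁎)·α_c`. -/
noncomputable def Cpost (a αd αc θ φ : ℝ) : ℝ :=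
  θ + (1 - Pcoll a θ φ) * (αd - θ) + Pcoll a θ φ * αc

namespace StmtAux

noncomputable def psiA (αd x : ℝ) : ℝ := ‖((x - αd : ℝ) : AddCircle (2 * π))‖

lemma two_pi_ne : (2 * π : ℝ) ≠ 0 := by positivity

lemma abs_two_pi_div_two : |(2 * π : ℝ)| / 2 = π := by
  rw [abs_of_pos Real.two_pi_pos]; ring

lemma psiA_nonneg (αd x : ℝ) : 0 ≤ psiA αd x := norm_nonneg _

lemma psiA_le_pi (αd x : ℝ) : psiA αd x ≤ π := by
  have h := AddCircle.norm_le_half_period (p := 2 * π)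
    (x := ((x - αd : ℝ) : AddCircle (2 * π))) two_pi_ne
  rwa [abs_two_pi_div_two] at h

lemma psiA_continuous (αd : ℝ) : Continuous (psiA αd) :=
  continuous_norm.comp ((AddCircle.continuous_mk' (2 * π)).comp
    (continuous_id.sub continuous_const))

lemma psiA_periodic (αd x : ℝ) : psiA αd (x + 2 * π) = psiA αd x := by
  unfold psiA
  rw [show x + 2 * π - αd = (x - αd) + 2 * π by ring, AddCircle.coe_add_period]

lemma psiA_le_abs (αd x : ℝ) : psiA αd x ≤ |x - αd| := by
  simpa [psiA, Real.norm_eq_abs] using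
    QuotientAddGroup.norm_mk_le_norm (S := AddSubgroup.zmultiples (2 * π)) (m := x - αd)

lemma psiA_eq_abs {αd x : ℝ} (hx : |x - αd| ≤ π) : psiA αd x = |x - αd| := by
  refine (AddCircle.norm_coe_eq_abs_iff (2 * π) two_pi_ne).2 ?_
  rw [abs_two_pi_div_two]; exact hx

lemma key {a αd αc θ φ : ℝ} (ha : 0 ≤ a) (ha1 : a ≤ 1)
    (hθ : θ ∈ Set.Ico (-π + αd) (π + αd)) (hφ : φ ∈ Set.Ico (-π + αd) (π + αd)) :
    psiA αd (Cpost a αd αc θ φ) - psiA αd θ ≤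
      (a - 1) * psiA αd θ + a * |αc| / π * (psiA αd θ + psiA αd φ) := by
  have hπ := Real.pi_pos
  obtain ⟨hθ1, hθ2⟩ := hθ; obtain ⟨hφ1, hφ2⟩ := hφ
  have hdθ : |θ - αd| ≤ π := abs_le.2 ⟨by linarith, by linarith⟩
  have hdφ : |φ - αd| ≤ π := abs_le.2 ⟨by linarith, by linarith⟩
  have hψθ : psiA αd θ = |θ - αd| := psiA_eq_abs hdθ
  have hψφ : psiA αd φ = |φ - αd| := psiA_eq_abs hdφ
  have hs : |θ - φ| ≤ |θ - αd| + |φ - αd| := by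
    have h := abs_add_le (θ - αd) (αd - φ)
    rw [show θ - αd + (αd - φ) = θ - φ by ring, abs_sub_comm αd φ] at h
    exact h
  have hs2π : |θ - φ| ≤ 2 * π := le_trans hs (by linarith)
  have hmin0 : 0 ≤ min |θ - φ| (2 * π - |θ - φ|) :=
    le_min (abs_nonneg _) (by linarith)
  have hminπ : min |θ - φ| (2 * π - |θ - φ|) ≤ π := by
    rcases le_or_gt |θ - φ| π with h | h
    · exact le_trans (min_le_left _ _) h
    · exact le_trans (min_le_right _ _) (by linarith)
  have hP0 : 0 ≤ Pcoll a θ φ := by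
    unfold Pcoll Gfun
    have : (0:ℝ) ≤ 1 / π := by positivity
    exact mul_nonneg ha (mul_nonneg this hmin0)
  have hPa : Pcoll a θ φ ≤ a := by
    unfold Pcoll Gfun
    have h1 : (1 / π) * min |θ - φ| (2 * π - |θ - φ|) ≤ 1 := by
      rw [div_mul_eq_mul_div, one_mul, div_le_one hπ]; exact hminπ
    nlinarith
  have hPs : Pcoll a θ φ ≤ a / π * |θ - φ| := by
    unfold Pcoll Gfun
    have h1 : min |θ - φ| (2 * π - |θ - φ|) ≤ |θ - φ| := min_le_left _ _
    have h2 : (0:ℝ) ≤ a / π := by positivity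
    calc a * ((1 / π) * min |θ - φ| (2 * π - |θ - φ|))
        = a / π * min |θ - φ| (2 * π - |θ - φ|) := by ring
      _ ≤ a / π * |θ - φ| := mul_le_mul_of_nonneg_left h1 h2
  have hC : Cpost a αd αc θ φ - αd = Pcoll a θ φ * (θ - αd) + Pcoll a θ φ * αc := by
    unfold Cpost; ring
  have h1 : psiA αd (Cpost a αd αc θ φ) ≤ |Pcoll a θ φ * (θ - αd) + Pcoll a θ φ * αc| := by
    have h := psiA_le_abs αd (Cpost a αd αc θ φ); rwa [hC] at h
  have h2 : |Pcoll a θ φ * (θ - αd) + Pcoll a θ φ * αc|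
      ≤ Pcoll a θ φ * |θ - αd| + Pcoll a θ φ * |αc| := by
    calc |Pcoll a θ φ * (θ - αd) + Pcoll a θ φ * αc|
        ≤ |Pcoll a θ φ * (θ - αd)| + |Pcoll a θ φ * αc| := abs_add_le _ _
      _ = Pcoll a θ φ * |θ - αd| + Pcoll a θ φ * |αc| := by
          rw [abs_mul, abs_mul, abs_of_nonneg hP0]
  have h3 : Pcoll a θ φ * |θ - αd| ≤ a * |θ - αd| :=
    mul_le_mul_of_nonneg_right hPa (abs_nonneg _)
  have h4 : Pcoll a θ φ * |αc| ≤ a / π * (|θ - αd| + |φ - αd|) * |αc| :=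
    mul_le_mul_of_nonneg_right
      (hPs.trans (mul_le_mul_of_nonneg_left hs (by positivity))) (abs_nonneg _)
  have h5 : a / π * (|θ - αd| + |φ - αd|) * |αc|
      = a * |αc| / π * (|θ - αd| + |φ - αd|) := by ring
  rw [hψθ, hψφ]
  have h6 := (h1.trans h2)
  linarith

lemma integrable_of_bound {μ : Measure ℝ} [IsFiniteMeasure μ] {u : ℝ → ℝ}
    (hu : Measurable u) (C : ℝ) (h : ∀ x, |u x| ≤ C) : Integrable u μ :=
  ⟨hu.aestronglyMeasurable,
    HasFiniteIntegral.of_bounded (C := C)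
      (Eventually.of_forall fun x => by simpa [Real.norm_eq_abs] using h x)⟩

lemma cont_C (a αd αc : ℝ) : Continuous (fun q : ℝ × ℝ => Cpost a αd αc q.1 q.2) := by
  unfold Cpost Pcoll Gfun
  fun_prop


end StmtAux

/-- If `θ̄₀ < π(1/a − 1)` and `|α_c| ≤ (π/2)(1/a − 1) − θ̄₀/2`, then any weak solution of the
spatially homogeneous Boltzmann-type model aligns to the desired direction:
`θ̄(t) = (1/ρ)∫_I |θ − α_d| f(t)(dθ) → 0` as `t → +∞`. -/
theorem stmt_1 (αd αc : ℝ) (hαd : αd ∈ Set.Ico (-π) π) (hαc : αc ∈ Set.Ico (-π) π)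
    (ρ a : ℝ) (hρ : 0 < ρ) (hρ1 : ρ ≤ 1) (ha : 0 < a) (ha1 : a ≤ 1)
    (f : ℝ → Measure ℝ)
    (hsupp : ∀ t, 0 ≤ t → f t (Set.Ico (-π + αd) (π + αd))ᶜ = 0)
    (hmass : ∀ t, 0 ≤ t → f t Set.univ = ENNReal.ofReal ρ)
    -- weak formulation of the spatially homogeneous Boltzmann-type model:
    (hweak : ∀ ψ : ℝ → ℝ, Measurable ψ → (∃ M, ∀ x, |ψ x| ≤ M) →
      (∀ x, ψ (x + 2 * π) = ψ x) → ∀ t, 0 ≤ t →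
      HasDerivAt (fun s => ∫ θ, ψ θ ∂(f s))
        (∫ θ, ∫ φ, (ψ (Cpost a αd αc θ φ) - ψ θ) ∂(f t) ∂(f t)) t)
    (θbar0 : ℝ) (hθbar0 : θbar0 = (1 / ρ) * ∫ θ, |θ - αd| ∂(f 0))
    (h1 : θbar0 < π * (1 / a - 1))
    (h2 : |αc| ≤ (π / 2) * (1 / a - 1) - θbar0 / 2) :
    Tendsto (fun t => (1 / ρ) * ∫ θ, |θ - αd| ∂(f t)) atTop (nhds 0) := by
  clear h1 hαd hαc hρ1
  have hπ := Real.pi_pos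
  set ψ : ℝ → ℝ := StmtAux.psiA αd with hψdef
  have hψm : Measurable ψ := (StmtAux.psiA_continuous αd).measurable
  have hψb : ∃ M, ∀ x, |ψ x| ≤ M :=
    ⟨π, fun x => by
      rw [abs_of_nonneg (StmtAux.psiA_nonneg _ _)]; exact StmtAux.psiA_le_pi _ _⟩
  have hg := hweak ψ hψm hψb (StmtAux.psiA_periodic αd)
  set g : ℝ → ℝ := fun s => ∫ θ, ψ θ ∂(f s) with hgdef
  set D : ℝ → ℝ :=
    fun t => ∫ θ, ∫ φ, (ψ (Cpost a αd αc θ φ) - ψ θ) ∂(f t) ∂(f t) with hDdef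
  have hfin : ∀ t, 0 ≤ t → IsFiniteMeasure (f t) := fun t ht =>
    ⟨by rw [hmass t ht]; exact ENNReal.ofReal_lt_top⟩
  have haeI : ∀ t, 0 ≤ t → ∀ᵐ θ ∂(f t), θ ∈ Set.Ico (-π + αd) (π + αd) := by
    intro t ht
    rw [ae_iff]
    exact hsupp t ht
  have hgnn : ∀ t, 0 ≤ g t := fun t =>
    integral_nonneg fun x => StmtAux.psiA_nonneg _ _
  set c : ℝ := a * |αc| / π with hc
  have hc0 : 0 ≤ c := by positivity
  set L : ℝ := ρ * ((1 - a) - 2 * c) with hL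
  -- the differential inequality
  have hDle : ∀ t, 0 ≤ t → D t ≤ -L * g t := by
    intro t ht
    haveI := hfin t ht
    have hρt : ((f t) Set.univ).toReal = ρ := by
      rw [hmass t ht, ENNReal.toReal_ofReal hρ.le]
    have hψint : Integrable ψ (f t) :=
      StmtAux.integrable_of_bound hψm π (fun x => by
        rw [abs_of_nonneg (StmtAux.psiA_nonneg _ _)]; exact StmtAux.psiA_le_pi _ _)
    have hM0 : 0 ≤ g t := hgnn t
    have hFcont : Continuous (fun q : ℝ × ℝ => ψ (Cpost a αd αc q.1 q.2) - ψ q.1) :=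
      ((StmtAux.psiA_continuous αd).comp (StmtAux.cont_C a αd αc)).sub
        ((StmtAux.psiA_continuous αd).comp continuous_fst)
    have hFbdd : ∀ θ φ : ℝ, |ψ (Cpost a αd αc θ φ) - ψ θ| ≤ 2 * π := by
      intro θ φ
      have h1 := StmtAux.psiA_le_pi αd (Cpost a αd αc θ φ)
      have h2 := StmtAux.psiA_le_pi αd θ
      have h3 := StmtAux.psiA_nonneg αd (Cpost a αd αc θ φ)
      have h4 := StmtAux.psiA_nonneg αd θ
      rw [abs_le]; constructor <;> [linarith; linarith]
    have hinner_meas : StronglyMeasurable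
        (fun θ => ∫ φ, (ψ (Cpost a αd αc θ φ) - ψ θ) ∂(f t)) :=
      StronglyMeasurable.integral_prod_right
        (f := fun θ φ => ψ (Cpost a αd αc θ φ) - ψ θ) hFcont.stronglyMeasurable
    have hinner_bdd : ∀ θ, |∫ φ, (ψ (Cpost a αd αc θ φ) - ψ θ) ∂(f t)| ≤ 2 * π * ρ := by
      intro θ
      have h := norm_integral_le_of_norm_le_const (μ := f t) (C := 2 * π)
        (f := fun φ => ψ (Cpost a αd αc θ φ) - ψ θ)
        (Eventually.of_forall fun φ => by
          simpa [Real.norm_eq_abs] using hFbdd θ φ)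
      rwa [measureReal_def, hρt, Real.norm_eq_abs] at h
    have hinner_int : Integrable
        (fun θ => ∫ φ, (ψ (Cpost a αd αc θ φ) - ψ θ) ∂(f t)) (f t) :=
      ⟨hinner_meas.aestronglyMeasurable,
        HasFiniteIntegral.of_bounded (C := 2 * π * ρ)
          (Eventually.of_forall fun θ => by
            simpa [Real.norm_eq_abs] using hinner_bdd θ)⟩
    have hBint : Integrable (fun θ => ((a - 1 + c) * ψ θ) * ρ + c * g t) (f t) :=
      ((hψint.const_mul (a - 1 + c)).mul_const ρ).add (integrable_const _)
    have hptae : ∀ᵐ θ ∂(f t),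
        (∫ φ, (ψ (Cpost a αd αc θ φ) - ψ θ) ∂(f t))
          ≤ ((a - 1 + c) * ψ θ) * ρ + c * g t := by
      filter_upwards [haeI t ht] with θ hθI
      have hφint1 : Integrable (fun φ => ψ (Cpost a αd αc θ φ) - ψ θ) (f t) :=
        StmtAux.integrable_of_bound
          ((hFcont.comp (Continuous.prodMk_right θ)).measurable) (2 * π)
          (fun φ => hFbdd θ φ)
      have hφint2 : Integrable
          (fun φ => (a - 1) * ψ θ + c * (ψ θ + ψ φ)) (f t) :=
        (integrable_const _).add (((integrable_const _).add hψint).const_mul c)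
      have hmono : ∀ᵐ φ ∂(f t),
          ψ (Cpost a αd αc θ φ) - ψ θ ≤ (a - 1) * ψ θ + c * (ψ θ + ψ φ) := by
        filter_upwards [haeI t ht] with φ hφI
        exact StmtAux.key ha.le ha1 hθI hφI
      have h5 := integral_mono_ae hφint1 hφint2 hmono
      have h6 : ∫ φ, ((a - 1) * ψ θ + c * (ψ θ + ψ φ)) ∂(f t)
          = ((a - 1 + c) * ψ θ) * ρ + c * g t := by
        have e0 : ∫ φ, ((a - 1) * ψ θ + c * (ψ θ + ψ φ)) ∂(f t)
            = ∫ φ, ((a - 1 + c) * ψ θ + c * ψ φ) ∂(f t) := by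
          congr 1; funext φ; ring
        have e1 := integral_add (μ := f t)
          (integrable_const ((a - 1 + c) * ψ θ)) (hψint.const_mul c)
        have e2 : ∫ (_ : ℝ), (a - 1 + c) * ψ θ ∂(f t) = ((a - 1 + c) * ψ θ) * ρ := by
          rw [integral_const, measureReal_def, hρt, smul_eq_mul, mul_comm]
        have e3 : ∫ φ, c * ψ φ ∂(f t) = c * g t := integral_const_mul c ψ
        rw [e0, e1, e2, e3]
      rw [h6] at h5
      exact h5
    have hDa := integral_mono_ae hinner_int hBint hptae
    have h7 : ∫ θ, (((a - 1 + c) * ψ θ) * ρ + c * g t) ∂(f t)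
        = ((a - 1 + c) * g t) * ρ + c * g t * ρ := by
      have e1 := integral_add (μ := f t)
        ((hψint.const_mul (a - 1 + c)).mul_const ρ) (integrable_const (c * g t))
      have e2 : ∫ θ, ((a - 1 + c) * ψ θ) * ρ ∂(f t) = ((a - 1 + c) * g t) * ρ := by
        rw [integral_mul_const ρ (fun θ => (a - 1 + c) * ψ θ),
          integral_const_mul (a - 1 + c) ψ]
      have e3 : ∫ (_ : ℝ), c * g t ∂(f t) = c * g t * ρ := by
        rw [integral_const, measureReal_def, hρt, smul_eq_mul, mul_comm]
      rw [e1, e2, e3]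
    rw [h7] at hDa
    have h8 : ((a - 1 + c) * g t) * ρ + c * g t * ρ = -L * g t := by
      rw [hL]; ring
    rw [h8] at hDa
    exact hDa
  -- Gronwall: h s := g s * exp (L s) is antitone on [0, ∞)
  have hh : ∀ t, 0 ≤ t → HasDerivAt (fun s => g s * rexp (L * s))
      (D t * rexp (L * t) + g t * (rexp (L * t) * (L * 1))) t := by
    intro t ht
    exact (hg t ht).mul (((hasDerivAt_id t).const_mul L).exp)
  have hanti : AntitoneOn (fun s => g s * rexp (L * s)) (Set.Ici (0:ℝ)) := by
    apply antitoneOn_of_deriv_nonpos (convex_Ici 0)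
    · intro x hx
      exact ((hh x hx).continuousAt.continuousWithinAt)
    · intro x hx
      rw [interior_Ici] at hx
      exact ((hh x (le_of_lt hx)).differentiableAt.differentiableWithinAt)
    · intro x hx
      rw [interior_Ici] at hx
      rw [(hh x hx.le).deriv]
      have h1 := hDle x hx.le
      have h2 : (0:ℝ) < rexp (L * x) := Real.exp_pos _
      nlinarith [mul_le_mul_of_nonneg_right h1 h2.le]
  have hgle : ∀ t, 0 ≤ t → g t ≤ g 0 * rexp (-(L * t)) := by
    intro t ht
    have h := hanti Set.self_mem_Ici (Set.mem_Ici.2 ht) ht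
    simp only [mul_zero, Real.exp_zero, mul_one] at h
    rw [Real.exp_neg, ← div_eq_mul_inv, le_div_iff₀ (Real.exp_pos _)]
    exact h
  -- connect g to the target quantity
  have hTeq : ∀ t, 0 ≤ t → (∫ θ, |θ - αd| ∂(f t)) = g t := by
    intro t ht
    apply integral_congr_ae
    filter_upwards [haeI t ht] with θ hθ
    obtain ⟨h1', h2'⟩ := hθ
    exact (StmtAux.psiA_eq_abs (abs_le.2 ⟨by linarith, by linarith⟩)).symm
  have hθ0g : θbar0 = (1 / ρ) * g 0 := by rw [hθbar0, hTeq 0 le_rfl]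
  have hθ00 : 0 ≤ θbar0 := by
    rw [hθ0g]
    exact mul_nonneg (by positivity) (hgnn 0)
  -- lower bound on L
  have hkey2 : 2 * c ≤ (1 - a) - a * θbar0 / π := by
    have h3 : (2 * a / π) * |αc| ≤ (2 * a / π) * ((π / 2) * (1 / a - 1) - θbar0 / 2) :=
      mul_le_mul_of_nonneg_left h2 (by positivity)
    have h4 : (2 * a / π) * ((π / 2) * (1 / a - 1) - θbar0 / 2)
        = (1 - a) - a * θbar0 / π := by
      field_simp
    have h5 : 2 * c = (2 * a / π) * |αc| := by rw [hc]; ring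
    rw [h5]; rw [h4] at h3; exact h3
  have hLlb : ρ * (a * θbar0 / π) ≤ L := by
    rw [hL]
    have : a * θbar0 / π ≤ (1 - a) - 2 * c := by linarith
    exact mul_le_mul_of_nonneg_left this hρ.le
  have hL0 : 0 ≤ L := by
    refine le_trans ?_ hLlb
    have : 0 ≤ a * θbar0 / π := div_nonneg (mul_nonneg ha.le hθ00) hπ.le
    exact mul_nonneg hρ.le this
  rcases eq_or_lt_of_le hθ00 with h0 | h0
  · -- θbar0 = 0 : the solution is identically aligned
    have hg0 : g 0 = 0 := by
      have : (1 / ρ) * g 0 = 0 := by rw [← hθ0g, ← h0]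
      have hρ' : (1:ℝ) / ρ ≠ 0 := by positivity
      exact (mul_eq_zero.1 this).resolve_left hρ'
    refine Tendsto.congr' ?_ (tendsto_const_nhds (x := (0:ℝ)))
    filter_upwards [eventually_ge_atTop (0:ℝ)] with t ht
    have h1' := hgle t ht
    rw [hg0, zero_mul] at h1'
    have h2' := hgnn t
    have : g t = 0 := le_antisymm h1' h2'
    rw [hTeq t ht, this, mul_zero]
  · -- θbar0 > 0 : exponential decay
    have hLpos : 0 < L := lt_of_lt_of_le (by positivity) hLlb
    have hub : Tendsto (fun t : ℝ => θbar0 * rexp (-(L * t))) atTop (nhds 0) := by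
      have h1' : Tendsto (fun t : ℝ => L * t) atTop atTop :=
        Tendsto.const_mul_atTop hLpos tendsto_id
      have h2' : Tendsto (fun t : ℝ => -(L * t)) atTop atBot :=
        tendsto_neg_atTop_atBot.comp h1'
      have h3' : Tendsto (fun t : ℝ => rexp (-(L * t))) atTop (nhds 0) :=
        Real.tendsto_exp_atBot.comp h2'
      have h4' := h3'.const_mul θbar0
      rw [mul_zero] at h4'
      exact h4'
    refine tendsto_of_tendsto_of_tendsto_of_le_of_le' tendsto_const_nhds hub ?_ ?_
    · filter_upwards [eventually_ge_atTop (0:ℝ)] with t ht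
      exact mul_nonneg (by positivity) (integral_nonneg fun x => abs_nonneg _)
    · filter_upwards [eventually_ge_atTop (0:ℝ)] with t ht
      rw [hTeq t ht]
      calc (1 / ρ) * g t ≤ (1 / ρ) * (g 0 * rexp (-(L * t))) :=
            mul_le_mul_of_nonneg_left (hgle t ht) (by positivity)
        _ = θbar0 * rexp (-(L * t)) := by rw [hθ0g]; ring
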